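/- The group of units of GR(R,r) has order 8^r (2^r - 1), and it is the direct product of a cyclic group of order 2^r - 1 (the nonzero Teichmüller elements) and an abelian group of order 8^r consisting of the elements 1 + 2a_1 + u a_2 + 2u a_3 with a_1, a_2, a_3 Teichmüller representatives. -/

import Mathlib

set_option maxSynthPendingDepth 3
set_option synthInstance.maxHeartbeats 400000
set_option maxHeartbeats 1000000

open DualNumber TrivSqZeroExt Polynomial

abbrev R4 := DualNumber (ZMod 4)

noncomputable def res : R4 →+* ZMod 2 :=
  (ZMod.castHom (show 2 ∣ 4 by norm_num) (ZMod 2)).comp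
    (fstHom (ZMod 4) (ZMod 4) (ZMod 4)).toRingHom

noncomputable def uGR (f : Polynomial R4) : Polynomial R4 ⧸ Ideal.span {f} :=
  Ideal.Quotient.mk (Ideal.span {f}) (C eps)

namespace S9

instance : Fintype R4 := Fintype.ofEquiv (ZMod 4 × ZMod 4) (Equiv.refl _)

lemma card_R4 : Nat.card R4 = 16 :=
  (Nat.card_congr (Equiv.refl _ : R4 ≃ (ZMod 4 × ZMod 4))).trans (by simp [Nat.card_eq_fintype_card]; rfl)

lemma two_R4 : (2 : R4) = inl (2 : ZMod 4) := by
  have : ((2:ℕ) : R4) = inl ((2:ℕ) : ZMod 4) := by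
    ext
    · rw [fst_natCast, fst_inl]
    · rw [snd_natCast, snd_inl]
  simpa using this

lemma res_apply (x : R4) : res x = ZMod.castHom (show 2 ∣ 4 by norm_num) (ZMod 2) x.fst := rfl

lemma res_surjective : Function.Surjective res := by
  intro y
  refine ⟨inl ((y.val : ℕ) : ZMod 4), ?_⟩
  rw [res_apply, fst_inl]
  revert y; decide

lemma res_eps : res (eps : R4) = 0 := by
  rw [res_apply, fst_eps]; simp

lemma res_two : res (2 : R4) = 0 := by
  rw [res_apply, two_R4, fst_inl]; decide

lemma ker_res : RingHom.ker res = Ideal.span {(2 : R4), (eps : R4)} := by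
  ext x
  constructor
  · intro hx
    rw [RingHom.mem_ker, res_apply] at hx
    rw [Ideal.mem_span_pair]
    have h2 : ∃ b : ZMod 4, x.fst = 2 * b := by
      revert hx; generalize x.fst = a; revert a; decide
    obtain ⟨b, hb⟩ := h2
    refine ⟨inl b, inr x.snd * eps + inl x.snd, ?_⟩
    ext
    · simp [two_R4, hb, mul_comm]
    · simp [two_R4]
  · intro hx
    rw [Ideal.mem_span_pair] at hx
    obtain ⟨a, b, rfl⟩ := hx
    rw [RingHom.mem_ker, map_add, map_mul, map_mul, res_eps, res_two]
    ring

variable (f : Polynomial R4)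

local notation "S" => AdjoinRoot f
local notation "F" => AdjoinRoot (Polynomial.map res f)

noncomputable def pihom : S →+* F :=
  Ideal.Quotient.lift _ ((Ideal.Quotient.mk (Ideal.span {f.map res})).comp (mapRingHom res))
    (by
      intro a ha
      rw [Ideal.mem_span_singleton] at ha
      obtain ⟨c, rfl⟩ := ha
      show Ideal.Quotient.mk (Ideal.span {f.map res}) (Polynomial.map res (f * c)) = 0
      rw [Polynomial.map_mul, Ideal.Quotient.eq_zero_iff_mem]
      exact Ideal.mul_mem_right _ _ (Ideal.subset_span rfl))

lemma pihom_mk (p : Polynomial R4) :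
    pihom f (Ideal.Quotient.mk _ p) = Ideal.Quotient.mk _ (p.map res) :=
  Ideal.Quotient.lift_mk _ _ _

lemma pihom_surjective : Function.Surjective (pihom f) := by
  intro y
  obtain ⟨q, rfl⟩ := Ideal.Quotient.mk_surjective y
  obtain ⟨p, rfl⟩ := Polynomial.map_surjective res res_surjective q
  exact ⟨Ideal.Quotient.mk _ p, pihom_mk f p⟩

noncomputable def uu : S := Ideal.Quotient.mk (Ideal.span {f}) (C eps)

lemma uu_eq_uGR : uu f = uGR f := rfl

lemma uGR_eq : uGR f = Ideal.Quotient.mk (Ideal.span {f}) (C eps) := rfl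

lemma pihom_uu : pihom f (uu f) = 0 := by
  rw [show uu f = Ideal.Quotient.mk (Ideal.span {f}) (C eps) from rfl,
    pihom_mk, map_C, res_eps, C_0, map_zero]
  rfl

lemma uu_sq : uu f * uu f = 0 := by
  rw [show uu f = AdjoinRoot.mk f (C eps) from rfl,
    ← map_mul (AdjoinRoot.mk f), ← C_mul, eps_mul_eps, C_0, map_zero]

lemma two_S : (2 : S) = Ideal.Quotient.mk (Ideal.span {f}) (C (2:R4)) := by
  rw [show (C (2:R4)) = (2 : Polynomial R4) from map_ofNat C 2, map_ofNat]
  rfl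

lemma four_S : (2 : S) * 2 = 0 := by
  have h : ((2:R4) * 2 : R4) = 0 := by rw [two_R4]; ext <;> simp <;> decide
  rw [← map_ofNat (AdjoinRoot.mk f) 2, ← map_mul, ← map_ofNat C 2, ← C_mul, h, C_0, map_zero]

lemma ker_pihom : RingHom.ker (pihom f) = Ideal.span {(2 : S), uu f} := by
  ext x
  constructor
  · intro hx
    obtain ⟨p, rfl⟩ := AdjoinRoot.mk_surjective x
    replace hx : pihom f (Ideal.Quotient.mk (Ideal.span {f}) p) = 0 := hx
    rw [pihom_mk] at hx
    replace hx : AdjoinRoot.mk (f.map res) (p.map res) = 0 := hx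
    rw [AdjoinRoot.mk_eq_zero] at hx
    obtain ⟨cq, hcq⟩ := hx
    obtain ⟨q, rfl⟩ := Polynomial.map_surjective res res_surjective cq
    have hmem : p - f * q ∈ (Ideal.span {(2:R4), (eps:R4)}).map (C : R4 →+* Polynomial R4) := by
      rw [Ideal.mem_map_C_iff]
      intro n
      rw [← ker_res, RingHom.mem_ker, ← coeff_map, Polynomial.map_sub, Polynomial.map_mul, hcq,
        sub_self, coeff_zero]
    rw [Ideal.map_span, Set.image_insert_eq, Set.image_singleton, Ideal.mem_span_pair] at hmem
    obtain ⟨a, b, hab⟩ := hmem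
    rw [Ideal.mem_span_pair]
    refine ⟨AdjoinRoot.mk f a, AdjoinRoot.mk f b, ?_⟩
    have hp : p = a * C 2 + b * C eps + f * q := by linear_combination -hab
    have hf : AdjoinRoot.mk f (f * q) = 0 := by
      rw [AdjoinRoot.mk_eq_zero]; exact dvd_mul_right f q
    rw [hp, map_add, map_add, map_mul (AdjoinRoot.mk f),
      map_mul (AdjoinRoot.mk f), hf, add_zero, map_ofNat C 2, map_ofNat, show uu f = AdjoinRoot.mk f (C eps) from rfl]
  · intro hx
    rw [Ideal.mem_span_pair] at hx
    obtain ⟨a, b, rfl⟩ := hx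
    rw [RingHom.mem_ker, map_add, map_mul, map_mul, pihom_uu, mul_zero, add_zero, map_ofNat]
    have h2F : (2 : F) = 0 := by
      rw [show (2:F) = AdjoinRoot.of (f.map res) (2:ZMod 2) from (map_ofNat _ 2).symm,
        show (2:ZMod 2) = 0 by decide, map_zero]
    rw [h2F, mul_zero]

section main
variable {f} (hmonic : f.Monic) (hirr : Irreducible (f.map res)) {r : ℕ} (hr : 1 ≤ r)
  (hdeg : f.natDegree = r)

include hmonic hdeg in
lemma cardS : Nat.card S = 16 ^ r := by
  rw [Nat.card_congr (AdjoinRoot.powerBasis' hmonic).basis.equivFun.toEquiv, Nat.card_fun,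
    card_R4, Nat.card_eq_fintype_card, Fintype.card_fin, AdjoinRoot.powerBasis'_dim, hdeg]

include hmonic in
lemma finiteS : Finite S := by
  have b := AdjoinRoot.powerBasis' hmonic
  exact Finite.of_equiv _ b.basis.equivFun.toEquiv.symm

include hmonic hdeg in
lemma cardF : Nat.card F = 2 ^ r := by
  rw [Nat.card_congr (AdjoinRoot.powerBasis' (hmonic.map res)).basis.equivFun.toEquiv,
    Nat.card_fun, Nat.card_zmod, Nat.card_eq_fintype_card, Fintype.card_fin,
    AdjoinRoot.powerBasis'_dim, hmonic.natDegree_map res, hdeg]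

include hmonic in
lemma finiteF : Finite F :=
  Finite.of_equiv _ (AdjoinRoot.powerBasis' (hmonic.map res)).basis.equivFun.toEquiv.symm

include hmonic hdeg in
lemma card_ker : Nat.card (RingHom.ker (pihom f)) = 8 ^ r := by
  have h := Submodule.card_eq_card_quotient_mul_card (M := S) (RingHom.ker (pihom f))
  have e : (S ⧸ (RingHom.ker (pihom f))) ≃ F :=
    (RingHom.quotientKerEquivOfSurjective (pihom_surjective f)).toEquiv
  rw [Nat.card_congr e, cardS hmonic hdeg, cardF hmonic hdeg] at h
  have h2 : (16:ℕ) ^ r = (8 * 2) ^ r := by norm_num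
  rw [h2, mul_pow] at h
  have := pow_pos (show (0:ℕ) < 2 by norm_num) r
  exact (Nat.eq_of_mul_eq_mul_right this h.symm)

include hmonic in
lemma finiteSu : Finite Sˣ := by
  haveI := finiteS hmonic
  exact inferInstance

lemma ker_sq {x : S} (hx : x ∈ RingHom.ker (pihom f)) : x * x = 0 := by
  rw [ker_pihom, Ideal.mem_span_pair] at hx
  obtain ⟨a, b, rfl⟩ := hx
  have h4 := four_S f
  have hu := uu_sq f
  linear_combination (a ^ 2 + a * b * uu f) * h4 + b ^ 2 * hu

include hirr in
lemma isUnit_of_pihom_ne_zero {x : S} (hx : pihom f x ≠ 0) : IsUnit x := by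
  letI : Fact (Irreducible (f.map res)) := ⟨hirr⟩
  obtain ⟨y, hy⟩ := pihom_surjective f (pihom f x)⁻¹
  have ht : x * y - 1 ∈ RingHom.ker (pihom f) := by
    rw [RingHom.mem_ker, map_sub, map_mul, hy, map_one, mul_inv_cancel₀ hx, sub_self]
  refine IsUnit.of_mul_eq_one (a := x) (y * (1 - (x * y - 1))) ?_
  linear_combination -ker_sq ht
lemma NID : 4 ^ r = 1 + (2 ^ r - 1) * (2 ^ r + 1) := by
  obtain ⟨n, hn⟩ : ∃ n, 2 ^ r = n + 1 := ⟨2 ^ r - 1, (Nat.succ_pred_eq_of_pos (pow_pos two_pos r)).symm⟩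
  have h4 : (4:ℕ) ^ r = (2 ^ r) * (2 ^ r) := by
    rw [show (4:ℕ) = 2 * 2 by norm_num, mul_pow]
  rw [h4, hn]
  simp only [Nat.add_sub_cancel]
  ring

include hr in
lemma NID2 : 4 ^ r = 4 * 4 ^ (r - 1) := by
  conv_lhs => rw [show r = (r-1) + 1 from (Nat.succ_pred_eq_of_pos hr).symm]
  rw [pow_succ]; ring

include hmonic hirr hdeg in
lemma F_pow {y : F} (hy : y ≠ 0) : y ^ (2 ^ r - 1) = 1 := by
  letI : Fact (Irreducible (f.map res)) := ⟨hirr⟩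
  haveI := finiteF hmonic
  letI : Fintype F := Fintype.ofFinite _
  have hcard : Fintype.card F = 2 ^ r := by rw [← Nat.card_eq_fintype_card, cardF hmonic hdeg]
  rw [← hcard]
  exact FiniteField.pow_card_sub_one_eq_one y hy

include hirr in
lemma pihom_unit_ne_zero (x : Sˣ) : pihom f x.val ≠ 0 := by
  letI : Fact (Irreducible (f.map res)) := ⟨hirr⟩
  intro h
  have : pihom f x.val * pihom f (x⁻¹).val = 1 := by
    rw [← map_mul, Units.mul_inv, map_one]
  rw [h, zero_mul] at this
  exact zero_ne_one this

-- x^4 = 1 iff x - 1 in ker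
include hmonic hirr hr hdeg in
lemma GA_iff (x : Sˣ) :
    x ^ 4 = 1 ↔ x.val - 1 ∈ RingHom.ker (pihom f) := by
  constructor
  · intro hx
    rw [RingHom.mem_ker, map_sub, map_one, sub_eq_zero]
    set y := pihom f x.val with hy
    have hy0 : y ≠ 0 := pihom_unit_ne_zero hirr x
    have hy4 : y ^ 4 = 1 := by
      rw [hy, ← map_pow, show (x.val) ^ 4 = ((x ^ 4 : Sˣ) : AdjoinRoot f) by
        rw [Units.val_pow_eq_pow_val], hx, Units.val_one, map_one]
    have hyq : y ^ (2 ^ r - 1) = 1 := F_pow hmonic hirr hdeg hy0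
    have h1 : y ^ (4 ^ r) = 1 := by
      rw [NID2 hr, pow_mul, hy4, one_pow]
    have h2 : y ^ (4 ^ r) = y := by
      rw [NID, pow_add, pow_one, pow_mul, hyq, one_pow, mul_one]
    rw [← h2, h1]
  · intro ht
    have h4 := four_S f
    have hsq := ker_sq ht
    have : x.val ^ 4 = 1 := by
      linear_combination (6 + 4 * (x.val - 1) + (x.val - 1) ^ 2) * hsq + (x.val - 1) * h4
    ext
    rw [Units.val_pow_eq_pow_val, this, Units.val_one]

include hmonic hirr hr hdeg in
lemma unit_pow_q4 (x : Sˣ) : (x ^ (2 ^ r - 1)) ^ 4 = 1 := by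
  rw [GA_iff hmonic hirr hr hdeg]
  rw [RingHom.mem_ker, map_sub, map_one, sub_eq_zero, Units.val_pow_eq_pow_val, map_pow]
  exact F_pow hmonic hirr hdeg (pihom_unit_ne_zero hirr x)

include hmonic hirr hr hdeg in
lemma unit_pow_main (x : Sˣ) : x ^ (4 ^ r * (2 ^ r - 1)) = 1 := by
  have h1 : x ^ ((2 ^ r - 1) * 4) = 1 := by rw [pow_mul]; exact unit_pow_q4 hmonic hirr hr hdeg x
  have harith : 4 ^ r * (2 ^ r - 1) = ((2 ^ r - 1) * 4) * 4 ^ (r - 1) := by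
    rw [NID2 hr]; ring
  rw [harith, pow_mul, h1, one_pow]

include hr in
lemma eq_one_of_pows {G : Type*} [Group G] (x : G) (h4 : x ^ 4 = 1)
    (hq : x ^ (2 ^ r - 1) = 1) : x = 1 := by
  have h1 : x ^ (4 ^ r) = 1 := by rw [NID2 hr, pow_mul, h4, one_pow]
  have h2 : x ^ (4 ^ r) = x := by
    rw [NID, pow_add, pow_one, pow_mul, hq, one_pow, mul_one]
  rw [← h2, h1]

-- Teichmuller lift
include hmonic hirr hr hdeg in
lemma teich (s : S) : ∃ a : S, a ^ 2 ^ r = a ∧ s - a ∈ RingHom.ker (pihom f) := by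
  by_cases h : pihom f s = 0
  · exact ⟨0, by rw [zero_pow (pow_ne_zero r two_ne_zero)], by rwa [sub_zero, RingHom.mem_ker]⟩
  · obtain ⟨x, hx⟩ := isUnit_of_pihom_ne_zero hirr h
    refine ⟨((x ^ (4 ^ r) : Sˣ) : AdjoinRoot f), ?_, ?_⟩
    · have hq : (x ^ (4 ^ r)) ^ (2 ^ r - 1) = 1 := by
        rw [← pow_mul]
        exact unit_pow_main hmonic hirr hr hdeg x
      have h2r : 2 ^ r = (2 ^ r - 1) + 1 := (Nat.succ_pred_eq_of_pos (pow_pos two_pos r)).symm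
      rw [← Units.val_pow_eq_pow_val, ← pow_mul, h2r]
      rw [show 4 ^ r * ((2 ^ r - 1) + 1) = 4 ^ r * (2 ^ r - 1) + 4 ^ r by ring,
        pow_add, unit_pow_main hmonic hirr hr hdeg x, one_mul]
    · rw [RingHom.mem_ker, map_sub, sub_eq_zero, Units.val_pow_eq_pow_val, map_pow, hx]
      set y := pihom f s with hy
      have hy0 : y ≠ 0 := h
      rw [NID, pow_add, pow_one, pow_mul, F_pow hmonic hirr hdeg hy0, one_pow, mul_one]

end main

end S9

set_option maxHeartbeats 2000000 in
theorem stmt9 (r : ℕ) (hr : 1 ≤ r) (f : Polynomial R4) (hmonic : f.Monic)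
    (hirr : Irreducible (f.map res)) (hdeg : f.natDegree = r) :
    Nat.card (Polynomial R4 ⧸ Ideal.span {f})ˣ = 8 ^ r * (2 ^ r - 1) ∧
    ∃ GC GA : Subgroup (Polynomial R4 ⧸ Ideal.span {f})ˣ,
      IsCyclic GC ∧ Nat.card GC = 2 ^ r - 1 ∧ Nat.card GA = 8 ^ r ∧
      Nonempty ((Polynomial R4 ⧸ Ideal.span {f})ˣ ≃* GC × GA) ∧
      (∀ x : (Polynomial R4 ⧸ Ideal.span {f})ˣ,
        x ∈ GC ↔ (x : Polynomial R4 ⧸ Ideal.span {f}) ^ 2 ^ r = (x : Polynomial R4 ⧸ Ideal.span {f})) ∧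
      (∀ x : (Polynomial R4 ⧸ Ideal.span {f})ˣ,
        x ∈ GA ↔ ∃ a1 a2 a3 : Polynomial R4 ⧸ Ideal.span {f},
          a1 ^ 2 ^ r = a1 ∧ a2 ^ 2 ^ r = a2 ∧ a3 ^ 2 ^ r = a3 ∧
          (x : Polynomial R4 ⧸ Ideal.span {f}) = 1 + 2 * a1 + uGR f * a2 + 2 * (uGR f) * a3) := by
  classical
  letI : Fact (Irreducible (f.map res)) := ⟨hirr⟩
  haveI hFS : Finite (AdjoinRoot f) := S9.finiteS hmonic
  haveI hFF : Finite (AdjoinRoot (f.map res)) := S9.finiteF hmonic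
  have main : Nat.card (AdjoinRoot f)ˣ = 8 ^ r * (2 ^ r - 1) ∧
    ∃ GC GA : Subgroup (AdjoinRoot f)ˣ,
      IsCyclic GC ∧ Nat.card GC = 2 ^ r - 1 ∧ Nat.card GA = 8 ^ r ∧
      Nonempty ((AdjoinRoot f)ˣ ≃* GC × GA) ∧
      (∀ x : (AdjoinRoot f)ˣ, x ∈ GC ↔ (x : AdjoinRoot f) ^ 2 ^ r = (x : AdjoinRoot f)) ∧
      (∀ x : (AdjoinRoot f)ˣ, x ∈ GA ↔ ∃ a1 a2 a3 : AdjoinRoot f,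
        a1 ^ 2 ^ r = a1 ∧ a2 ^ 2 ^ r = a2 ∧ a3 ^ 2 ^ r = a3 ∧
        (x : AdjoinRoot f) = 1 + 2 * a1 + S9.uu f * a2 + 2 * S9.uu f * a3) := by
    have hq1 : (2 ^ r - 1) + 1 = 2 ^ r := Nat.succ_pred_eq_of_pos (pow_pos two_pos r)
    set GC : Subgroup (AdjoinRoot f)ˣ := MonoidHom.ker (powMonoidHom (2 ^ r - 1)) with hGC
    set GA : Subgroup (AdjoinRoot f)ˣ := MonoidHom.ker (powMonoidHom 4) with hGA
    have hmemC : ∀ x : (AdjoinRoot f)ˣ, x ∈ GC ↔ x ^ (2 ^ r - 1) = 1 := fun x => Iff.rfl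
    have hmemA : ∀ x : (AdjoinRoot f)ˣ, x ∈ GA ↔ x ^ 4 = 1 := fun x => Iff.rfl
    set ψ : (AdjoinRoot f)ˣ →* (AdjoinRoot (f.map res))ˣ := Units.map (S9.pihom f) with hψ
    have hψval : ∀ x : (AdjoinRoot f)ˣ,
        ((ψ x : (AdjoinRoot (f.map res))ˣ) : AdjoinRoot (f.map res)) = S9.pihom f x.val :=
      fun _ => rfl
    -- every unit of F has (2^r-1)-th power one
    have hFq : ∀ y : (AdjoinRoot (f.map res))ˣ, y ^ (2 ^ r - 1) = 1 := by
      intro y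
      ext
      rw [Units.val_pow_eq_pow_val, Units.val_one]
      exact S9.F_pow hmonic hirr hdeg y.ne_zero
    have hFfix : ∀ y : (AdjoinRoot (f.map res))ˣ, y ^ 4 ^ r = y := by
      intro y
      rw [S9.NID, pow_add, pow_one, pow_mul, hFq y, one_pow, mul_one]
    set ψ' : GC →* (AdjoinRoot (f.map res))ˣ := ψ.comp GC.subtype with hψ'
    have hinj : Function.Injective ψ' := by
      rw [injective_iff_map_eq_one]
      rintro ⟨a, ha⟩ h1
      have hval : S9.pihom f a.val = 1 := by
        have h2 := congrArg (Units.val) h1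
        rw [Units.val_one] at h2
        rw [← h2]; rfl
      have hker : a.val - 1 ∈ RingHom.ker (S9.pihom f) := by
        rw [RingHom.mem_ker, map_sub, map_one, hval, sub_self]
      have h4 : a ^ 4 = 1 := (S9.GA_iff hmonic hirr hr hdeg a).mpr hker
      exact Subtype.ext (S9.eq_one_of_pows hr a h4 ha)
    have hsurj : Function.Surjective ψ' := by
      intro y
      obtain ⟨s, hs⟩ := S9.pihom_surjective f (y : AdjoinRoot (f.map res))
      have hs0 : S9.pihom f s ≠ 0 := by rw [hs]; exact y.ne_zero
      obtain ⟨x, hx⟩ := (S9.isUnit_of_pihom_ne_zero hirr hs0)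
      have hψx : ψ x = y := by ext; rw [hψval, hx, hs]
      refine ⟨⟨x ^ 4 ^ r, ?_⟩, ?_⟩
      · rw [hmemC, ← pow_mul]
        exact S9.unit_pow_main hmonic hirr hr hdeg x
      · show ψ (x ^ 4 ^ r) = y
        rw [map_pow, hψx, hFfix y]
    set e1 : GC ≃* (AdjoinRoot (f.map res))ˣ := MulEquiv.ofBijective ψ' ⟨hinj, hsurj⟩ with he1
    haveI hcyc : IsCyclic GC := isCyclic_of_surjective e1.symm e1.symm.surjective
    have hcardGC : Nat.card GC = 2 ^ r - 1 := by
      rw [Nat.card_congr e1.toEquiv, Nat.card_units, S9.cardF hmonic hdeg]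
    -- GA ≃ ker pihom
    have eGA : GA ≃ RingHom.ker (S9.pihom f) := by
      refine Equiv.ofBijective
        (fun x => ⟨(x : (AdjoinRoot f)ˣ).val - 1,
          (S9.GA_iff hmonic hirr hr hdeg _).mp x.prop⟩) ⟨?_, ?_⟩
      · rintro ⟨x, hx⟩ ⟨y, hy⟩ hxy
        simp only [Subtype.mk.injEq] at hxy ⊢
        exact Units.ext (by linear_combination hxy)
      · rintro ⟨t, ht⟩
        have hinv : (1 + t) * (1 - t) = 1 := by linear_combination -S9.ker_sq ht
        refine ⟨⟨Units.mkOfMulEqOne (1 + t) (1 - t) hinv, ?_⟩, ?_⟩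
        · rw [hmemA, S9.GA_iff hmonic hirr hr hdeg]
          have : (Units.mkOfMulEqOne (1 + t) (1 - t) hinv).val = 1 + t :=
            Units.val_mkOfMulEqOne hinv
          rw [this]
          simpa using ht
        · apply Subtype.ext
          show (Units.mkOfMulEqOne (1 + t) (1 - t) hinv).val - 1 = t
          rw [Units.val_mkOfMulEqOne hinv]; ring
    have hcardGA : Nat.card GA = 8 ^ r := by
      rw [Nat.card_congr eGA, S9.card_ker hmonic hdeg]
    -- direct product
    set μ : GC × GA →* (AdjoinRoot f)ˣ := MonoidHom.coprod GC.subtype GA.subtype with hμ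
    have hμinj : Function.Injective μ := by
      rw [injective_iff_map_eq_one]
      rintro ⟨⟨c, hc⟩, ⟨a, ha⟩⟩ h1
      have hca : c * a = 1 := h1
      have hc4 : c ^ 4 = 1 := by
        have : c = a⁻¹ := by rw [eq_inv_iff_mul_eq_one]; exact hca
        rw [this, inv_pow, (hmemA a).mp ha, inv_one]
      have hc1 : c = 1 := S9.eq_one_of_pows hr c hc4 hc
      have ha1 : a = 1 := by rw [hc1, one_mul] at hca; exact hca
      rw [Prod.ext_iff]
      exact ⟨Subtype.ext hc1, Subtype.ext ha1⟩
    have hμsurj : Function.Surjective μ := by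
      intro x
      have hcmem : x ^ 4 ^ r ∈ GC := by
        rw [hmemC, ← pow_mul]
        exact S9.unit_pow_main hmonic hirr hr hdeg x
      have hc4 : (x ^ 4 ^ r) ^ 4 = x ^ 4 := by
        rw [← pow_mul, show 4 ^ r * 4 = 4 + ((2 ^ r - 1) * 4) * (2 ^ r + 1) by rw [S9.NID]; ring,
          pow_add, pow_mul, pow_mul,
          S9.unit_pow_q4 hmonic hirr hr hdeg x, one_pow, mul_one]
      have hamem : (x ^ 4 ^ r)⁻¹ * x ∈ GA := by
        rw [hmemA, mul_pow, inv_pow, hc4, inv_mul_cancel]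
      exact ⟨⟨⟨x ^ 4 ^ r, hcmem⟩, ⟨(x ^ 4 ^ r)⁻¹ * x, hamem⟩⟩, by
        show (x ^ 4 ^ r) * ((x ^ 4 ^ r)⁻¹ * x) = x
        rw [← mul_assoc, mul_inv_cancel, one_mul]⟩
    set e : (AdjoinRoot f)ˣ ≃* GC × GA := (MulEquiv.ofBijective μ ⟨hμinj, hμsurj⟩).symm with he
    have hcardU : Nat.card (AdjoinRoot f)ˣ = 8 ^ r * (2 ^ r - 1) := by
      rw [Nat.card_congr e.toEquiv, Nat.card_prod, hcardGC, hcardGA, mul_comm]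
    refine ⟨hcardU, GC, GA, hcyc, hcardGC, hcardGA, ⟨e⟩, ?_, ?_⟩
    · intro x
      rw [hmemC]
      constructor
      · intro h
        have hv : x.val ^ (2 ^ r - 1) = 1 := by
          rw [← Units.val_pow_eq_pow_val, h, Units.val_one]
        rw [← hq1, pow_succ, hv, one_mul]
      · intro h
        have h1 : x.val ^ (2 ^ r - 1) * x.val = x.val := by rw [← pow_succ, hq1]; exact h
        have h2 : x ^ (2 ^ r - 1) * x = 1 * x := by
          ext
          rw [Units.val_mul, Units.val_pow_eq_pow_val, h1, Units.val_mul, Units.val_one, one_mul]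
        exact mul_right_cancel h2
    · intro x
      rw [hmemA, S9.GA_iff hmonic hirr hr hdeg]
      constructor
      · intro ht
        rw [S9.ker_pihom, Ideal.mem_span_pair] at ht
        obtain ⟨b1, b2, hb⟩ := ht
        obtain ⟨a1, ha1, t1mem⟩ := S9.teich hmonic hirr hr hdeg b1
        obtain ⟨a2, ha2, t2mem⟩ := S9.teich hmonic hirr hr hdeg b2
        rw [S9.ker_pihom, Ideal.mem_span_pair] at t1mem t2mem
        obtain ⟨c1, d1, ht1⟩ := t1mem
        obtain ⟨c2, d2, ht2⟩ := t2mem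
        obtain ⟨a3, ha3, t3mem⟩ := S9.teich hmonic hirr hr hdeg (d1 + c2)
        rw [S9.ker_pihom, Ideal.mem_span_pair] at t3mem
        obtain ⟨c3, d3, ht3⟩ := t3mem
        refine ⟨a1, a2, a3, ha1, ha2, ha3, ?_⟩
        have h4 := S9.four_S f
        have hu := S9.uu_sq f
        linear_combination -hb - 2*ht1 - S9.uu f*ht2 - 2*S9.uu f*ht3
          + (c1 + S9.uu f*c3)*h4 + (d2 + 2*d3)*hu
      · rintro ⟨a1, a2, a3, -, -, -, hx⟩
        rw [S9.ker_pihom, Ideal.mem_span_pair]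
        exact ⟨a1 + S9.uu f * a3, a2, by linear_combination -hx⟩
  exact main
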